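/- Suppose two curves g₁, g₂ on a matrix Lie group G satisfy ġᵢ = ξᵢ(t)gᵢ + X̃(gᵢ) + gᵢζᵢ(t), where X̃ satisfies the cocycle property X̃(hg) = h X̃(g) + X̃(h)g and ξ₁(t) = ξ₂(t) for all t. Then the left-invariant relative state g₁₂ = g₁⁻¹g₂ satisfies the self-contained equation d/dt g₁₂ = −ζ₁(t) g₁₂ + X̃(g₁₂) + g₁₂ ζ₂(t), which does not involve g₁ or g₂ individually. -/

import Mathlib

open Matrix

attribute [local instance] Matrix.linftyOpNormedRing Matrix.linftyOpNormedAlgebra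

/-- If `ġᵢ = ξᵢ(t) gᵢ + X̃(gᵢ) + gᵢ ζᵢ(t)` with `X̃` satisfying the cocycle property and
`ξ₁ = ξ₂`, then the left-invariant relative state `g₁₂ = g₁⁻¹ g₂` satisfies the
self-contained equation `d/dt g₁₂ = −ζ₁(t) g₁₂ + X̃(g₁₂) + g₁₂ ζ₂(t)`. -/
theorem left_relative_state_autonomous (n : ℕ) (G : Set (Matrix (Fin n) (Fin n) ℝ))
    (hone : (1 : Matrix (Fin n) (Fin n) ℝ) ∈ G)
    (hmul : ∀ a ∈ G, ∀ b ∈ G, a * b ∈ G)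
    (hinv : ∀ a ∈ G, a⁻¹ ∈ G)
    (Xt : Matrix (Fin n) (Fin n) ℝ → Matrix (Fin n) (Fin n) ℝ)
    (ξ₁ ξ₂ ζ₁ ζ₂ : ℝ → Matrix (Fin n) (Fin n) ℝ)
    (hcoc : ∀ g ∈ G, ∀ h ∈ G, Xt (h * g) = h * Xt g + Xt h * g)
    (hξ : ∀ t, ξ₁ t = ξ₂ t)
    (g₁ g₂ : ℝ → Matrix (Fin n) (Fin n) ℝ)
    (hg₁G : ∀ t, g₁ t ∈ G) (hg₂G : ∀ t, g₂ t ∈ G)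
    (hunit : ∀ t, IsUnit (g₁ t))
    (hdg₁ : ∀ t, HasDerivAt g₁ (ξ₁ t * g₁ t + Xt (g₁ t) + g₁ t * ζ₁ t) t)
    (hdg₂ : ∀ t, HasDerivAt g₂ (ξ₂ t * g₂ t + Xt (g₂ t) + g₂ t * ζ₂ t) t) :
    ∀ t, HasDerivAt (fun s => (g₁ s)⁻¹ * g₂ s)
      (-(ζ₁ t) * ((g₁ t)⁻¹ * g₂ t) + Xt ((g₁ t)⁻¹ * g₂ t)
        + ((g₁ t)⁻¹ * g₂ t) * ζ₂ t) t := by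
  intro t
  set k := (g₁ t)⁻¹ with hk
  have hdet : IsUnit (g₁ t).det := (Matrix.isUnit_iff_isUnit_det _).mp (hunit t)
  have h1 : g₁ t * k = 1 := Matrix.mul_nonsing_inv _ hdet
  have h2 : k * g₁ t = 1 := Matrix.nonsing_inv_mul _ hdet
  set g₁' := ξ₁ t * g₁ t + Xt (g₁ t) + g₁ t * ζ₁ t with hg₁'
  set g₂' := ξ₂ t * g₂ t + Xt (g₂ t) + g₂ t * ζ₂ t with hg₂'
  -- derivative of the inverse
  have hinvderiv : HasDerivAt (fun s => (g₁ s)⁻¹) (-(k * g₁' * k)) t := by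
    obtain ⟨u, hu⟩ := hunit t
    have hfd := hasFDerivAt_ringInverse (𝕜 := ℝ)
      (R := Matrix (Fin n) (Fin n) ℝ) u
    rw [Matrix.coe_units_inv, hu] at hfd
    have hcomp := hfd.comp_hasDerivAt t (hdg₁ t)
    have heq : (fun s => (g₁ s)⁻¹) = fun s => Ring.inverse (g₁ s) := by
      funext s; exact Matrix.nonsing_inv_eq_ringInverse _
    rw [heq]
    exact hcomp
  have hd : HasDerivAt (fun s => (g₁ s)⁻¹ * g₂ s)
      (-(k * g₁' * k) * g₂ t + k * g₂') t := hinvderiv.mul (hdg₂ t)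
  convert hd using 1
  have hg12G : k * g₂ t ∈ G := hmul _ (hinv _ (hg₁G t)) _ (hg₂G t)
  have hXt2 : Xt (g₂ t) = g₁ t * Xt (k * g₂ t) + Xt (g₁ t) * (k * g₂ t) := by
    have := hcoc (k * g₂ t) hg12G (g₁ t) (hg₁G t)
    rw [← mul_assoc, h1, one_mul] at this
    exact this
  rw [hg₁', hg₂', hξ t, hXt2]
  have e1 : ∀ x, g₁ t * (k * x) = x := fun x => by rw [← mul_assoc, h1, one_mul]
  have e2 : ∀ x, k * (g₁ t * x) = x := fun x => by rw [← mul_assoc, h2, one_mul]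
  simp only [mul_add, add_mul, neg_mul, mul_neg, neg_add, mul_assoc, e1, e2]
  abel
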